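/- Let G be a core input-output network with input node ι and output node o. Define a relation on the super-simple nodes by ρ ≥ τ iff ρ precedes τ on every ιo-simple path containing both. Then the super-simple nodes of G are totally ordered by this downstream ordering: for any two distinct super-simple nodes ρ, τ, every ιo-simple path visits them in the same order. -/

import Mathlib

/-- A directed simple path from `a` to `b`. -/
def IsSimplePath {V : Type*} (Adj : V → V → Prop) (a b : V) (l : List V) : Prop :=
  l.Chain' Adj ∧ l.head? = some a ∧ l.getLast? = some b ∧ l.Nodup

private lemma extract_path {V : Type*} [DecidableEq V] (Adj : V → V → Prop) :
    ∀ (l : List V) (a : V), (a :: l).Chain' Adj →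
      ∃ p : List V, p.Chain' Adj ∧ p.Nodup ∧ p.head? = some a ∧
        p.getLast? = (a :: l).getLast? ∧ p ⊆ a :: l := by
  intro l
  induction l with
  | nil =>
    intro a _
    exact ⟨[a], by simp [List.Chain'], by simp, rfl, rfl, by simp⟩
  | cons c l' ih =>
    intro a h
    rw [List.Chain', List.isChain_cons_cons] at h
    obtain ⟨p, hpc, hpn, hph, hpl, hps⟩ := ih c h.2
    by_cases hap : a ∈ p
    · obtain ⟨s, t, rfl⟩ := List.append_of_mem hap
      refine ⟨a :: t, hpc.suffix ⟨s, rfl⟩,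
        (List.sublist_append_right s (a :: t)).nodup hpn, rfl, ?_, ?_⟩
      · rw [List.getLast?_cons_cons, ← hpl, List.getLast?_append_cons]
      · exact fun x hx => List.mem_cons_of_mem a (hps (List.mem_append_right s hx))
    · refine ⟨a :: p, ?_, List.nodup_cons.2 ⟨hap, hpn⟩, rfl, ?_, ?_⟩
      · rw [List.Chain', List.isChain_cons]
        exact ⟨fun y hy => by rw [hph] at hy; cases hy; exact h.1, hpc⟩
      · cases p with
        | nil => simp at hph
        | cons q qs => simp only [List.getLast?_cons_cons]; exact hpl
      · intro x hx
        rcases List.mem_cons.1 hx with rfl | hx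
        · exact List.mem_cons_self
        · exact List.mem_cons_of_mem a (hps hx)

theorem stmt5 {V : Type*} [Fintype V] [DecidableEq V] (Adj : V → V → Prop)
    (ι o : V) (hio : ι ≠ o)
    (hcore : ∀ v : V, Relation.ReflTransGen Adj ι v ∧ Relation.ReflTransGen Adj v o)
    (ρ τ : V)
    (hρ : ∀ l : List V, IsSimplePath Adj ι o l → ρ ∈ l)
    (hτ : ∀ l : List V, IsSimplePath Adj ι o l → τ ∈ l)
    (hne : ρ ≠ τ) :
    (∀ l : List V, IsSimplePath Adj ι o l → l.idxOf ρ < l.idxOf τ) ∨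
    (∀ l : List V, IsSimplePath Adj ι o l → l.idxOf τ < l.idxOf ρ) := by
  by_contra hcon
  push_neg at hcon
  obtain ⟨⟨l₂, hl₂, hord₂⟩, ⟨l₁, hl₁, hord₁⟩⟩ := hcon
  obtain ⟨hc₁, hh₁, hg₁, hn₁⟩ := hl₁
  obtain ⟨hc₂, hh₂, hg₂, hn₂⟩ := hl₂
  have hmemρ₁ := hρ l₁ ⟨hc₁, hh₁, hg₁, hn₁⟩
  have hmemτ₁ := hτ l₁ ⟨hc₁, hh₁, hg₁, hn₁⟩
  have hmemρ₂ := hρ l₂ ⟨hc₂, hh₂, hg₂, hn₂⟩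
  obtain ⟨s₁, t₁, rfl⟩ := List.append_of_mem hmemρ₁
  obtain ⟨s₂, t₂, rfl⟩ := List.append_of_mem hmemρ₂
  have hρs₁ : ρ ∉ s₁ := fun h =>
    (List.disjoint_of_nodup_append hn₁) h (List.mem_cons_self)
  have hρs₂ : ρ ∉ s₂ := fun h =>
    (List.disjoint_of_nodup_append hn₂) h (List.mem_cons_self)
  have hiρ₁ : (s₁ ++ ρ :: t₁).idxOf ρ = s₁.length := by
    rw [List.idxOf_append_of_notMem hρs₁, List.idxOf_cons_self, Nat.add_zero]
  have hiρ₂ : (s₂ ++ ρ :: t₂).idxOf ρ = s₂.length := by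
    rw [List.idxOf_append_of_notMem hρs₂, List.idxOf_cons_self, Nat.add_zero]
  have hτs₁ : τ ∉ s₁ := by
    intro h
    have heq : (s₁ ++ ρ :: t₁).idxOf τ = s₁.idxOf τ := List.idxOf_append_of_mem h
    have hlt : s₁.idxOf τ < s₁.length := List.idxOf_lt_length_iff.2 h
    omega
  have hτt₂ : τ ∉ ρ :: t₂ := by
    intro h
    rcases List.mem_cons.1 h with rfl | h
    · exact hne rfl
    have hτns₂ : τ ∉ s₂ := fun hs =>
      (List.disjoint_of_nodup_append hn₂) hs (List.mem_cons_of_mem ρ h)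
    have heq : (s₂ ++ ρ :: t₂).idxOf τ = s₂.length + (ρ :: t₂).idxOf τ :=
      List.idxOf_append_of_notMem hτns₂
    have hτρ : (ρ :: t₂).idxOf τ = (t₂.idxOf τ) + 1 :=
      List.idxOf_cons_ne _ hne
    omega
  -- build the walk W = s₁ ++ ρ :: t₂ from ι to o avoiding τ
  have hWchain : (s₁ ++ ρ :: t₂).Chain' Adj := by
    rw [show s₁ ++ ρ :: t₂ = (s₁ ++ [ρ]) ++ t₂ by simp]
    apply List.IsChain.append
    · exact hc₁.prefix ⟨t₁, by simp⟩
    · exact hc₂.suffix ⟨s₂ ++ [ρ], by simp⟩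
    · intro x hx y hy
      have hx' : ρ = x := by
        rw [List.getLast?_append_cons] at hx; simpa using hx
      cases hx'
      have hch : (ρ :: t₂).Chain' Adj := hc₂.suffix ⟨s₂, rfl⟩
      rw [List.Chain', List.isChain_cons] at hch
      exact hch.1 y hy
  have hWhead : (s₁ ++ ρ :: t₂).head? = some ι := by
    have : (s₁ ++ ρ :: t₂).head? = (s₁ ++ ρ :: t₁).head? := by cases s₁ <;> simp
    rw [this]; exact hh₁
  have hWlast : (s₁ ++ ρ :: t₂).getLast? = some o := by
    rw [List.getLast?_append_cons]
    rw [List.getLast?_append_cons] at hg₂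
    exact hg₂
  obtain ⟨a, w, hWe⟩ : ∃ a w, s₁ ++ ρ :: t₂ = a :: w := by
    cases s₁ with
    | nil => exact ⟨ρ, t₂, rfl⟩
    | cons b s => exact ⟨b, s ++ ρ :: t₂, rfl⟩
  have ha : a = ι := by rw [hWe] at hWhead; simpa using hWhead
  obtain ⟨W', hW'c, hW'n, hW'h, hW'l, hW's⟩ := extract_path Adj w a (hWe ▸ hWchain)
  rw [← hWe] at hW'l hW's
  rw [ha] at hW'h
  have hsp : IsSimplePath Adj ι o W' := ⟨hW'c, hW'h, hW'l.trans hWlast, hW'n⟩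
  have hmem : τ ∈ s₁ ++ ρ :: t₂ := hW's (hτ W' hsp)
  exact (List.mem_append.1 hmem).elim hτs₁ hτt₂
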